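/- The homomorphism RO(ΠBT¹) ⊕ RO(ΠBT¹) → RO(ΠBT²) given by (α, β) ↦ π₁*(α) + π₂*(β) factors through the amalgamated direct sum RO(ΠBT¹) ⊕_{RO(C₂)} RO(ΠBT¹) (the quotient of the direct sum by the antidiagonal copy of RO(C₂), i.e. by the elements (γ, −γ) for γ ∈ RO(C₂)), and the induced homomorphism RO(ΠBT¹) ⊕_{RO(C₂)} RO(ΠBT¹) → RO(ΠBT²) is injective with image equal to SRO(ΠBT²). -/

import Mathlib

noncomputable section

namespace BT2

/-- The free abelian group on the six generators `1, σ, Ω₀₀, Ω₀₁, Ω₁₀, Ω₁₁`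
(indexed `0, 1, 2, 3, 4, 5`). -/
abbrev F6 : Type := Fin 6 →₀ ℤ

/-- The relation `Ω₀₀ + Ω₀₁ + Ω₁₀ + Ω₁₁ − 2σ + 2·1`. -/
def rel2 : F6 :=
  Finsupp.single 2 1 + Finsupp.single 3 1 + Finsupp.single 4 1 + Finsupp.single 5 1
    - 2 • Finsupp.single 1 1 + 2 • Finsupp.single 0 1

/-- The subgroup generated by the relation. -/
def relSub2 : AddSubgroup F6 := AddSubgroup.closure {rel2}

/-- `RO(ΠBT²)`. -/
abbrev RO2 : Type := F6 ⧸ relSub2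

/-- The quotient map for `RO(ΠBT²)`. -/
def mk2 : F6 →+ RO2 := QuotientAddGroup.mk' relSub2

/-- `SRO(ΠBT²)`, the subgroup of `RO(ΠBT²)` generated by the classes of
`1`, `σ`, `Ω₀₀ + Ω₀₁`, `Ω₁₀ + Ω₁₁`, `Ω₀₀ + Ω₁₀` and `Ω₀₁ + Ω₁₁`. -/
def SRO2 : AddSubgroup RO2 :=
  AddSubgroup.closure
    { mk2 (Finsupp.single 0 1), mk2 (Finsupp.single 1 1),
      mk2 (Finsupp.single 2 1 + Finsupp.single 3 1),
      mk2 (Finsupp.single 4 1 + Finsupp.single 5 1),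
      mk2 (Finsupp.single 2 1 + Finsupp.single 4 1),
      mk2 (Finsupp.single 3 1 + Finsupp.single 5 1) }

/-- The free abelian group on the four generators `1, σ, Ω₀, Ω₁`
(indexed `0, 1, 2, 3`). -/
abbrev F4 : Type := Fin 4 →₀ ℤ

/-- The relation `Ω₀ + Ω₁ − 2σ + 2·1`. -/
def rel1 : F4 :=
  Finsupp.single 2 1 + Finsupp.single 3 1 - 2 • Finsupp.single 1 1 + 2 • Finsupp.single 0 1

/-- The subgroup generated by the relation. -/
def relSub1 : AddSubgroup F4 := AddSubgroup.closure {rel1}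

/-- `RO(ΠBT¹)`, the quotient of the free abelian group on `1, σ, Ω₀, Ω₁` by
the relation `Ω₀ + Ω₁ = 2σ − 2·1`. -/
abbrev RO1 : Type := F4 ⧸ relSub1

/-- The quotient map for `RO(ΠBT¹)`. -/
def mk1 : F4 →+ RO1 := QuotientAddGroup.mk' relSub1

/-- The antidiagonal copy of `RO(C₂)` inside `RO(ΠBT¹) ⊕ RO(ΠBT¹)`:
the subgroup of elements `(γ, −γ)` for `γ ∈ RO(C₂) = ℤ{1, σ}`. -/
def antidiag : AddSubgroup (RO1 × RO1) :=
  AddSubgroup.closure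
    { (mk1 (Finsupp.single 0 1), -mk1 (Finsupp.single 0 1)),
      (mk1 (Finsupp.single 1 1), -mk1 (Finsupp.single 1 1)) }

/-! ### Auxiliary development -/

/-- The homomorphism out of a free abelian group determined by targets of generators. -/
def fr {n : ℕ} {G : Type} [AddCommGroup G] (t : Fin n → G) : (Fin n →₀ ℤ) →+ G :=
  Finsupp.liftAddHom fun i => zmultiplesHom G (t i)

@[simp] lemma fr_single {n : ℕ} {G : Type} [AddCommGroup G] (t : Fin n → G) (i : Fin n) (m : ℤ) :
    fr t (Finsupp.single i m) = m • t i := by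
  simp [fr, Finsupp.liftAddHom_apply_single]

lemma forall_mem {n : ℕ} {G : Type} [AddCommGroup G] (h : (Fin n →₀ ℤ) →+ G)
    (S : AddSubgroup G) (hs : ∀ i, h (Finsupp.single i 1) ∈ S) : ∀ w, h w ∈ S := by
  intro w
  induction w using Finsupp.induction with
  | zero => simpa using S.zero_mem
  | single_add a b f _ _ ih =>
    rw [map_add]
    refine S.add_mem ?_ ih
    have hb : Finsupp.single a b = b • Finsupp.single a (1 : ℤ) := by
      simp [Finsupp.smul_single]
    rw [hb, map_zsmul]
    exact S.zsmul_mem (hs a) b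

def P1 : F4 →+ F6 := fr ![Finsupp.single 0 1, Finsupp.single 1 1,
  Finsupp.single 2 1 + Finsupp.single 3 1, Finsupp.single 4 1 + Finsupp.single 5 1]
def P2 : F4 →+ F6 := fr ![Finsupp.single 0 1, Finsupp.single 1 1,
  Finsupp.single 2 1 + Finsupp.single 4 1, Finsupp.single 3 1 + Finsupp.single 5 1]

lemma P1_rel1 : P1 rel1 = rel2 := by
  simp [rel1, rel2, P1, map_add, map_sub]; abel

lemma P2_rel1 : P2 rel1 = rel2 := by
  simp [rel1, rel2, P2, map_add, map_sub]; abel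

lemma ker_cond (P : F4 →+ F6) (h : P rel1 = rel2) : relSub1 ≤ (mk2.comp P).ker := by
  rw [relSub1, AddSubgroup.closure_le]
  intro x hx
  rcases hx with rfl
  simp only [SetLike.mem_coe, AddMonoidHom.mem_ker, AddMonoidHom.comp_apply, h]
  rw [mk2, QuotientAddGroup.mk'_apply, QuotientAddGroup.eq_zero_iff]
  exact AddSubgroup.subset_closure rfl

def pi1 : RO1 →+ RO2 := QuotientAddGroup.lift relSub1 (mk2.comp P1) (ker_cond P1 P1_rel1)
def pi2 : RO1 →+ RO2 := QuotientAddGroup.lift relSub1 (mk2.comp P2) (ker_cond P2 P2_rel1)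

lemma pi1_mk (w : F4) : pi1 (mk1 w) = mk2 (P1 w) := rfl
lemma pi2_mk (w : F4) : pi2 (mk1 w) = mk2 (P2 w) := rfl

def psa : F4 →+ ℤ := fr ![1, 0, 0, -2]
def psb : F4 →+ ℤ := fr ![0, 1, 0, 2]
def psc : F4 →+ ℤ := fr ![0, 0, 1, -1]

def T : F4 →+ F4 :=
  ((Finsupp.singleAddHom 0).comp psa) + ((Finsupp.singleAddHom 1).comp psb) +
    ((Finsupp.singleAddHom 2).comp psc)

lemma sub_T_mem (w : F4) : w - T w ∈ relSub1 := by
  refine forall_mem (AddMonoidHom.id F4 - T) relSub1 ?_ w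
  intro i
  fin_cases i <;> simp [T, psa, psb, psc, Finsupp.singleAddHom_apply] <;>
    first
      | exact relSub1.zero_mem
      | · have h : ((fun₀ | (3 : Fin 4) => (1:ℤ)) : F4)
              - (((-fun₀ | 0 => 2) + fun₀ | 1 => 2) + -fun₀ | 2 => 1) = rel1 := by
            ext j; fin_cases j <;> simp [rel1, Finsupp.single_apply]
          rw [h]
          exact AddSubgroup.subset_closure rfl

lemma repr1 (w : F4) :
    mk1 w = mk1 (Finsupp.single 0 (psa w) + Finsupp.single 1 (psb w)
      + Finsupp.single 2 (psc w)) := by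
  have hT : T w = Finsupp.single 0 (psa w) + Finsupp.single 1 (psb w)
      + Finsupp.single 2 (psc w) := by
    simp [T, Finsupp.singleAddHom_apply]
  rw [← hT, mk1, QuotientAddGroup.mk'_apply, QuotientAddGroup.mk'_apply,
    QuotientAddGroup.eq_iff_sub_mem]
  exact sub_T_mem w

def l3 : F6 →+ ℤ := fr ![0, 0, 0, 1, 0, -1]
def l4 : F6 →+ ℤ := fr ![0, 0, 0, 0, 1, -1]
def m0 : F6 →+ ℤ := fr ![1, 0, 0, 0, 0, -2]
def m1 : F6 →+ ℤ := fr ![0, 1, 0, 0, 0, 2]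

lemma l3_rel2 : l3 rel2 = 0 := by simp [l3, rel2]
lemma l4_rel2 : l4 rel2 = 0 := by simp [l4, rel2]
lemma m0_rel2 : m0 rel2 = 0 := by simp [m0, rel2]
lemma m1_rel2 : m1 rel2 = 0 := by simp [m1, rel2]

lemma core (x y : RO1) (h : pi1 x + pi2 y = 0) : (x, y) ∈ antidiag := by
  obtain ⟨w, rfl⟩ := QuotientAddGroup.mk'_surjective relSub1 x
  obtain ⟨v, rfl⟩ := QuotientAddGroup.mk'_surjective relSub1 y
  rw [show QuotientAddGroup.mk' relSub1 = mk1 from rfl] at *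
  have hw := repr1 w
  have hv := repr1 v
  rw [hw, hv, pi1_mk, pi2_mk, ← map_add] at h
  have hmem : P1 (Finsupp.single 0 (psa w) + Finsupp.single 1 (psb w)
        + Finsupp.single 2 (psc w))
      + P2 (Finsupp.single 0 (psa v) + Finsupp.single 1 (psb v)
        + Finsupp.single 2 (psc v)) ∈ relSub2 := by
    rwa [mk2, QuotientAddGroup.mk'_apply, QuotientAddGroup.eq_zero_iff] at h
  rw [relSub2, AddSubgroup.mem_closure_singleton] at hmem
  obtain ⟨k, hk⟩ := hmem
  have e3 := congrArg l3 hk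
  have e4 := congrArg l4 hk
  have e0 := congrArg m0 hk
  have e1 := congrArg m1 hk
  rw [map_zsmul, l3_rel2, smul_zero] at e3
  rw [map_zsmul, l4_rel2, smul_zero] at e4
  rw [map_zsmul, m0_rel2, smul_zero] at e0
  rw [map_zsmul, m1_rel2, smul_zero] at e1
  simp [P1, P2, l3, l4, m0, m1, map_add, smul_add] at e3 e4 e0 e1
  -- e3 : 0 = psc w, e4 : 0 = psc v, e0 : 0 = psa w + psa v, e1 : 0 = psb w + psb v
  have hc0 : psc w = 0 := by omega
  have hc'0 : psc v = 0 := by omega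
  have ha0 : psa v = -psa w := by omega
  have hb0 : psb v = -psb w := by omega
  rw [hc0] at hw
  rw [ha0, hb0, hc'0] at hv
  have hx : mk1 w = psa w • mk1 (Finsupp.single 0 1) + psb w • mk1 (Finsupp.single 1 1) := by
    rw [hw, ← map_zsmul, ← map_zsmul, ← map_add]
    congr 1
    ext j; fin_cases j <;> simp [Finsupp.single_apply]
  have hy : mk1 v = psa w • (-mk1 (Finsupp.single 0 1))
      + psb w • (-mk1 (Finsupp.single 1 1)) := by
    have hF : (Finsupp.single 0 (-psa w) + Finsupp.single 1 (-psb w)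
          + Finsupp.single 2 0 : F4)
        = -(psa w • Finsupp.single 0 1 + psb w • Finsupp.single 1 1) := by
      ext j; fin_cases j <;> simp [Finsupp.single_apply]
    rw [hv, hF, map_neg, map_add, map_zsmul, map_zsmul, neg_add, zsmul_neg, zsmul_neg]
  have hxy : (mk1 w, mk1 v)
      = psa w • ((mk1 (Finsupp.single 0 1), -mk1 (Finsupp.single 0 1)) : RO1 × RO1)
        + psb w • ((mk1 (Finsupp.single 1 1), -mk1 (Finsupp.single 1 1)) : RO1 × RO1) := by
    rw [Prod.ext_iff]
    exact ⟨hx, hy⟩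
  rw [hxy]
  refine antidiag.add_mem (antidiag.zsmul_mem ?_ _) (antidiag.zsmul_mem ?_ _)
  · exact AddSubgroup.subset_closure (Or.inl rfl)
  · exact AddSubgroup.subset_closure (Or.inr rfl)

def g : RO1 × RO1 →+ RO2 :=
  pi1.comp (AddMonoidHom.fst RO1 RO1) + pi2.comp (AddMonoidHom.snd RO1 RO1)

lemma g_apply (x : RO1 × RO1) : g x = pi1 x.1 + pi2 x.2 := rfl

lemma antidiag_le_ker : antidiag ≤ g.ker := by
  rw [antidiag, AddSubgroup.closure_le]
  intro x hx
  simp only [Set.mem_insert_iff, Set.mem_singleton_iff] at hx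
  rcases hx with rfl | rfl <;>
    simp [SetLike.mem_coe, AddMonoidHom.mem_ker, g_apply, map_neg, pi1_mk, pi2_mk, P1, P2]

lemma antidiag_vanish : ∀ d ∈ antidiag, pi1 d.1 + pi2 d.2 = 0 := by
  intro d hd
  have := antidiag_le_ker hd
  rwa [AddMonoidHom.mem_ker, g_apply] at this

def f : (RO1 × RO1) ⧸ antidiag →+ RO2 := QuotientAddGroup.lift antidiag g antidiag_le_ker

lemma f_mk (x : RO1 × RO1) :
    f (QuotientAddGroup.mk' antidiag x) = pi1 x.1 + pi2 x.2 := rfl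

lemma f_injective : Function.Injective f := by
  intro p q hpq
  obtain ⟨x, rfl⟩ := QuotientAddGroup.mk'_surjective antidiag p
  obtain ⟨y, rfl⟩ := QuotientAddGroup.mk'_surjective antidiag q
  have hg : g (x - y) = 0 := by
    rw [map_sub, sub_eq_zero]
    exact hpq
  have hmem : ((x - y).1, (x - y).2) ∈ antidiag := core _ _ (by rw [← g_apply]; exact hg)
  rw [QuotientAddGroup.mk'_apply, QuotientAddGroup.mk'_apply, QuotientAddGroup.eq_iff_sub_mem]
  exact hmem

lemma pi1_mem (z : RO1) : pi1 z ∈ SRO2 := by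
  obtain ⟨w, rfl⟩ := QuotientAddGroup.mk'_surjective relSub1 z
  refine forall_mem (mk2.comp P1) SRO2 ?_ w
  intro i
  fin_cases i <;> simp [P1] <;> exact AddSubgroup.subset_closure (by simp)

lemma pi2_mem (z : RO1) : pi2 z ∈ SRO2 := by
  obtain ⟨w, rfl⟩ := QuotientAddGroup.mk'_surjective relSub1 z
  refine forall_mem (mk2.comp P2) SRO2 ?_ w
  intro i
  fin_cases i <;> simp [P2] <;> exact AddSubgroup.subset_closure (by simp)

lemma f_range : f.range = SRO2 := by
  apply le_antisymm
  · rintro r ⟨q, rfl⟩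
    obtain ⟨x, rfl⟩ := QuotientAddGroup.mk'_surjective antidiag q
    rw [f_mk]
    exact SRO2.add_mem (pi1_mem _) (pi2_mem _)
  · rw [SRO2, AddSubgroup.closure_le]
    intro t ht
    simp only [Set.mem_insert_iff, Set.mem_singleton_iff] at ht
    rcases ht with rfl | rfl | rfl | rfl | rfl | rfl
    · exact ⟨QuotientAddGroup.mk' antidiag (mk1 (Finsupp.single 0 1), 0),
        by rw [f_mk]; simp [pi1_mk, P1]⟩
    · exact ⟨QuotientAddGroup.mk' antidiag (mk1 (Finsupp.single 1 1), 0),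
        by rw [f_mk]; simp [pi1_mk, P1]⟩
    · exact ⟨QuotientAddGroup.mk' antidiag (mk1 (Finsupp.single 2 1), 0),
        by rw [f_mk]; simp [pi1_mk, P1]⟩
    · exact ⟨QuotientAddGroup.mk' antidiag (mk1 (Finsupp.single 3 1), 0),
        by rw [f_mk]; simp [pi1_mk, P1]⟩
    · exact ⟨QuotientAddGroup.mk' antidiag (0, mk1 (Finsupp.single 2 1)),
        by rw [f_mk]; simp [pi2_mk, P2]⟩
    · exact ⟨QuotientAddGroup.mk' antidiag (0, mk1 (Finsupp.single 3 1)),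
        by rw [f_mk]; simp [pi2_mk, P2]⟩


/-- The map `(α, β) ↦ π₁*(α) + π₂*(β)` from `RO(ΠBT¹) ⊕ RO(ΠBT¹)` to `RO(ΠBT²)`
factors through the amalgamated direct sum `RO(ΠBT¹) ⊕_{RO(C₂)} RO(ΠBT¹)`
(the quotient by the antidiagonal copy of `RO(C₂)`), and the induced map is
injective with image `SRO(ΠBT²)`. -/
theorem amalgamated_sum_iso_SRO2 :
    ∃ π₁ π₂ : RO1 →+ RO2,
      -- π₁*: 1 ↦ 1, σ ↦ σ, Ω₀ ↦ Ω₀₀ + Ω₀₁, Ω₁ ↦ Ω₁₀ + Ω₁₁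
      π₁ (mk1 (Finsupp.single 0 1)) = mk2 (Finsupp.single 0 1) ∧
      π₁ (mk1 (Finsupp.single 1 1)) = mk2 (Finsupp.single 1 1) ∧
      π₁ (mk1 (Finsupp.single 2 1)) = mk2 (Finsupp.single 2 1 + Finsupp.single 3 1) ∧
      π₁ (mk1 (Finsupp.single 3 1)) = mk2 (Finsupp.single 4 1 + Finsupp.single 5 1) ∧
      -- π₂*: 1 ↦ 1, σ ↦ σ, Ω₀ ↦ Ω₀₀ + Ω₁₀, Ω₁ ↦ Ω₀₁ + Ω₁₁
      π₂ (mk1 (Finsupp.single 0 1)) = mk2 (Finsupp.single 0 1) ∧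
      π₂ (mk1 (Finsupp.single 1 1)) = mk2 (Finsupp.single 1 1) ∧
      π₂ (mk1 (Finsupp.single 2 1)) = mk2 (Finsupp.single 2 1 + Finsupp.single 4 1) ∧
      π₂ (mk1 (Finsupp.single 3 1)) = mk2 (Finsupp.single 3 1 + Finsupp.single 5 1) ∧
      -- the addition map kills the antidiagonal copy of RO(C₂) ...
      (∀ d ∈ antidiag, π₁ d.1 + π₂ d.2 = 0) ∧
      -- injective with image SRO(ΠBT²)
      ∃ f : (RO1 × RO1) ⧸ antidiag →+ RO2,
        (∀ x : RO1 × RO1, f (QuotientAddGroup.mk' antidiag x) = π₁ x.1 + π₂ x.2) ∧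
        Function.Injective f ∧
        f.range = SRO2 := by
  refine ⟨pi1, pi2, ?_, ?_, ?_, ?_, ?_, ?_, ?_, ?_, antidiag_vanish, f, f_mk, f_injective,
    f_range⟩ <;>
    simp [pi1_mk, pi2_mk, P1, P2]

end BT2

end
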